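/- arXiv:1912.06919 — 4 statements merged into one kernel-verified Lean document; each statement's English description precedes it below -/
import Mathlib

section
/- For any integers p ≥ 1 and q ≥ 0, if u is the unique element in the interval [p, p+q] maximizing the 2-adic valuation v₂(u), then v₂(∑_{i=0}^{q} C(q,i)/(p+i)) = v₂(C(q, u-p)/u), where the sum is taken in ℚ and v₂ denotes the 2-adic valuation on ℚ. -/
open Finset Nat



def Nf (t q : ℕ) : ℕ := ∑ j ∈ Finset.range (q+1), 2^j * (t+j).choose j

lemma Nf_zero (t : ℕ) : Nf t 0 = 1 := by simp [Nf]

lemma Nf_succ (t q : ℕ) : Nf t (q+1) = Nf t q + 2^(q+1) * (t+(q+1)).choose (q+1) := by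
  simp [Nf, Finset.sum_range_succ]

lemma NA (t q : ℕ) : Nf t q + Nf (t+1) q = 2^(q+1) * (t+1+q).choose q := by
  induction q with
  | zero => simp [Nf_zero]
  | succ q ih =>
      rw [Nf_succ, Nf_succ]
      have h1 : t + (q+1) = t + q + 1 := by ring
      have h2 : t + 1 + (q+1) = t + q + 2 := by ring
      have h3 : t + 1 + q = t + q + 1 := by ring
      rw [h1, h2, h3] at *
      have pas1 : (t+q+1).choose q + (t+q+1).choose (q+1) = (t+q+2).choose (q+1) :=
        (Nat.choose_succ_succ' (t+q+1) q ▸ rfl)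
      have pas2 : (t+q+2).choose (q+1) + (t+q+2).choose (q+1) = 2 * (t+q+2).choose (q+1) := by ring
      calc Nf t q + 2^(q+1) * (t+q+1).choose (q+1) + (Nf (t+1) q + 2^(q+1) * (t+q+2).choose (q+1))
          = (Nf t q + Nf (t+1) q) + 2^(q+1) * ((t+q+1).choose (q+1) + (t+q+2).choose (q+1)) := by ring
        _ = 2^(q+1) * ((t+q+1).choose q + (t+q+1).choose (q+1) + (t+q+2).choose (q+1)) := by rw [ih]; ring
        _ = 2^(q+1) * ((t+q+2).choose (q+1) + (t+q+2).choose (q+1)) := by rw [pas1]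
        _ = 2^(q+2) * (t+q+2).choose (q+1) := by ring

lemma NB (t q : ℕ) : (q+1) * Nf t (q+1) = (t+q+2) * Nf t q + (t+1) * Nf (t+1) q := by
  have hNA := NA t q
  have hc : (t+q+1).choose (q+1) * (q+1) = (t+q+1).choose q * (t+1) := by
    have := Nat.choose_succ_right_eq (t+q+1) q
    simpa [show t+q+1-q = t+1 by omega] using this
  rw [Nf_succ]
  have h1 : t + (q+1) = t + q + 1 := by ring
  rw [h1]
  calc (q+1) * (Nf t q + 2^(q+1) * (t+q+1).choose (q+1))
      = (q+1) * Nf t q + 2^(q+1) * ((t+q+1).choose (q+1) * (q+1)) := by ring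
    _ = (q+1) * Nf t q + 2^(q+1) * ((t+q+1).choose q * (t+1)) := by rw [hc]
    _ = (q+1) * Nf t q + (t+1) * (2^(q+1) * (t+1+q).choose q) := by rw [show t+1+q = t+q+1 by ring]; ring
    _ = (q+1) * Nf t q + (t+1) * (Nf t q + Nf (t+1) q) := by rw [hNA]
    _ = (t+q+2) * Nf t q + (t+1) * Nf (t+1) q := by ring

lemma Nf_odd (t q : ℕ) : Nf t q % 2 = 1 := by
  induction q with
  | zero => simp [Nf_zero]
  | succ q ih =>
      rw [Nf_succ]
      have h2 : 2 ∣ 2^(q+1) * (t+(q+1)).choose (q+1) :=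
        Dvd.dvd.mul_right (dvd_pow_self 2 (Nat.succ_ne_zero q)) _
      omega



/-- If `2^a ∣ u` and `d < 2^a`, then `C(u+d, u)` is odd. -/
lemma odd_choose_add : ∀ (a u d : ℕ), 2^a ∣ u → d < 2^a → (u+d).choose u % 2 = 1 := by
  intro a
  induction a with
  | zero =>
      intro u d _ hd
      interval_cases d
      simp
  | succ a ih =>
      intro u d hdvd hd
      obtain ⟨u', rfl⟩ : 2 ∣ u := dvd_trans (dvd_pow_self 2 (Nat.succ_ne_zero a)) hdvd
      have hdvd' : 2^a ∣ u' := by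
        have : 2 * 2^a ∣ 2 * u' := by rw [← pow_succ' 2 a]; exact hdvd
        exact (mul_dvd_mul_iff_left (by norm_num : (2:ℕ) ≠ 0)).mp this
      have hmodeq := @Choose.choose_modEq_choose_mod_mul_choose_div_nat (2*u'+d) (2*u') 2 ⟨Nat.prime_two⟩
      have h1 : (2*u') % 2 = 0 := by omega
      have h2 : (2*u'+d) / 2 = u' + d/2 := by omega
      have h3 : (2*u') / 2 = u' := by omega
      rw [h1, h2, h3, Nat.choose_zero_right, one_mul] at hmodeq
      have hd2 : d/2 < 2^a := by
        have : 2^(a+1) = 2*2^a := by rw [pow_succ]; ring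
        omega
      have := ih u' (d/2) hdvd' hd2
      unfold Nat.ModEq at hmodeq
      omega

/-- If `2^a ∣ u`, `0 < u`, `e < 2^a`, then `C(u-1, e)` is odd. -/
lemma odd_choose_pred : ∀ (a u e : ℕ), 2^a ∣ u → 0 < u → e < 2^a → (u-1).choose e % 2 = 1 := by
  intro a
  induction a with
  | zero =>
      intro u e _ _ he
      interval_cases e
      simp
  | succ a ih =>
      intro u e hdvd hu he
      obtain ⟨u', rfl⟩ : 2 ∣ u := dvd_trans (dvd_pow_self 2 (Nat.succ_ne_zero a)) hdvd
      have hdvd' : 2^a ∣ u' := by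
        have : 2 * 2^a ∣ 2 * u' := by rw [← pow_succ' 2 a]; exact hdvd
        exact (mul_dvd_mul_iff_left (by norm_num : (2:ℕ) ≠ 0)).mp this
      have hu' : 0 < u' := by omega
      have hmodeq := @Choose.choose_modEq_choose_mod_mul_choose_div_nat (2*u'-1) e 2 ⟨Nat.prime_two⟩
      have h1 : (2*u'-1) % 2 = 1 := by omega
      have h2 : (2*u'-1) / 2 = u' - 1 := by omega
      rw [h1, h2] at hmodeq
      have h4 : Nat.choose 1 (e % 2) = 1 := by
        have : e % 2 = 0 ∨ e % 2 = 1 := by omega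
        rcases this with h | h <;> simp [h]
      rw [h4, one_mul] at hmodeq
      have he2 : e/2 < 2^a := by
        have : 2^(a+1) = 2*2^a := by rw [pow_succ]; ring
        omega
      have := ih u' (e/2) hdvd' hu' he2
      unfold Nat.ModEq at hmodeq
      omega



/-- Factorial identity: `C(q,u-p) * (p * C(p+q,p)) = u * (C(p+q,u) * C(u-1,p-1))`. -/
lemma prodE (p q u : ℕ) (hp : 1 ≤ p) (hpu : p ≤ u) (huq : u ≤ p + q) :
    q.choose (u-p) * (p * (p+q).choose p) = u * ((p+q).choose u * (u-1).choose (p-1)) := by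
  set K := (u-p)! * ((q-(u-p))! * (p-1)!) with hK
  have hKpos : 0 < K := by positivity
  have h1 : u - p ≤ q := by omega
  have h2 : p - 1 ≤ u - 1 := by omega
  have e1 : q.choose (u-p) * (u-p)! * (q-(u-p))! = q ! := Nat.choose_mul_factorial_mul_factorial h1
  have e2 : (p+q).choose p * p ! * q ! = (p+q)! := by
    have := Nat.choose_mul_factorial_mul_factorial (show p ≤ p+q by omega)
    simpa [show p+q-p = q by omega] using this
  have e3 : (u-1).choose (p-1) * (p-1)! * ((u-1)-(p-1))! = (u-1)! :=
    Nat.choose_mul_factorial_mul_factorial h2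
  have e3' : (u-1).choose (p-1) * (p-1)! * (u-p)! = (u-1)! := by
    rwa [show (u-1)-(p-1) = u-p by omega] at e3
  have e4 : (p+q).choose u * u ! * (q-(u-p))! = (p+q)! := by
    have := Nat.choose_mul_factorial_mul_factorial huq
    rwa [show p+q-u = q-(u-p) by omega] at this
  have ep : p * (p-1)! = p ! := Nat.mul_factorial_pred (by omega)
  have eu : u * (u-1)! = u ! := Nat.mul_factorial_pred (by omega)
  have L : q.choose (u-p) * (p * (p+q).choose p) * K = (p+q)! := by
    calc q.choose (u-p) * (p * (p+q).choose p) * K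
        = (p+q).choose p * (p * (p-1)!) * (q.choose (u-p) * (u-p)! * (q-(u-p))!) := by
          rw [hK]; ring
      _ = (p+q).choose p * p ! * q ! := by rw [ep, e1]
      _ = (p+q)! := e2
  have R : u * ((p+q).choose u * (u-1).choose (p-1)) * K = (p+q)! := by
    calc u * ((p+q).choose u * (u-1).choose (p-1)) * K
        = (p+q).choose u * (u * ((u-1).choose (p-1) * (p-1)! * (u-p)!)) * (q-(u-p))! := by
          rw [hK]; ring
      _ = (p+q).choose u * (u * (u-1)!) * (q-(u-p))! := by rw [e3']
      _ = (p+q).choose u * u ! * (q-(u-p))! := by rw [eu]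
      _ = (p+q)! := e4
  exact Nat.eq_of_mul_eq_mul_right hKpos (L.trans R.symm)

lemma keyB : ∀ (q t : ℕ), ∑ i ∈ Finset.range (q+1), (q.choose i : ℚ) / ((t : ℚ) + 1 + i)
    = (Nf t q : ℚ) / (((t+1) * ((t+1+q).choose (t+1)) : ℕ) : ℚ) := by
  intro q
  induction q with
  | zero =>
      intro t
      simp [Nf]
  | succ q ih =>
      intro t
      have hsplit : ∑ i ∈ Finset.range (q+2), ((q+1).choose i : ℚ) / ((t : ℚ) + 1 + i)
          = (∑ i ∈ Finset.range (q+1), (q.choose i : ℚ) / ((t : ℚ) + 1 + i))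
            + (∑ i ∈ Finset.range (q+1), (q.choose i : ℚ) / ((t : ℚ) + 2 + i)) := by
        have hterm : ∀ j ∈ Finset.range (q+1),
            ((q+1).choose (j+1) : ℚ) / ((t : ℚ) + 1 + ((j+1 : ℕ) : ℚ))
            = (q.choose (j+1) : ℚ)/((t:ℚ)+1+((j+1:ℕ):ℚ)) + (q.choose j : ℚ)/((t:ℚ)+2+(j:ℚ)) := by
          intro j _
          rw [Nat.choose_succ_succ q j]
          push_cast
          rw [show (t:ℚ)+1+((j:ℚ)+1) = (t:ℚ)+2+(j:ℚ) by ring]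
          rw [← add_div]
          ring
        rw [Finset.sum_range_succ' (fun i => ((q+1).choose i : ℚ) / ((t : ℚ) + 1 + i)) (q+1)]
        rw [Finset.sum_congr rfl hterm, Finset.sum_add_distrib]
        have hy : (∑ j ∈ Finset.range (q+1), ((q.choose (j+1):ℚ))/((t:ℚ)+1+((j+1:ℕ):ℚ)))
              + ((q+1).choose 0 : ℚ)/((t:ℚ)+1+((0:ℕ):ℚ))
            = ∑ i ∈ Finset.range (q+1), ((q.choose i:ℚ))/((t:ℚ)+1+(i:ℚ)) := by
          have h1 : ((q+1).choose 0 : ℚ) = ((q.choose 0 : ℕ) : ℚ) := by simp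
          rw [h1, ← Finset.sum_range_succ' (fun i => ((q.choose i:ℚ))/((t:ℚ)+1+(i:ℚ))) (q+1)]
          rw [Finset.sum_range_succ]
          simp [Nat.choose_eq_zero_of_lt (by omega : q < q+1)]
        calc (∑ j ∈ Finset.range (q+1), ((q.choose (j+1):ℚ))/((t:ℚ)+1+((j+1:ℕ):ℚ)))
              + (∑ j ∈ Finset.range (q+1), ((q.choose j:ℚ))/((t:ℚ)+2+(j:ℚ)))
              + ((q+1).choose 0 : ℚ)/((t:ℚ)+1+((0:ℕ):ℚ))
            = ((∑ j ∈ Finset.range (q+1), ((q.choose (j+1):ℚ))/((t:ℚ)+1+((j+1:ℕ):ℚ)))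
                + ((q+1).choose 0 : ℚ)/((t:ℚ)+1+((0:ℕ):ℚ)))
              + (∑ j ∈ Finset.range (q+1), ((q.choose j:ℚ))/((t:ℚ)+2+(j:ℚ))) := by ring
          _ = _ := by rw [hy]
      rw [hsplit, ih t]
      have iht1 := ih (t+1)
      push_cast at iht1 ⊢
      rw [show ((t:ℚ)+1+1) = (t:ℚ)+2 by ring] at iht1
      rw [iht1]
      have hC1pos : 0 < (t+1+q).choose (t+1) := Nat.choose_pos (by omega)
      have hC2pos : 0 < (t+1+(q+1)).choose (t+1) := Nat.choose_pos (by omega)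
      have hC2'pos : 0 < (t+1+1+q).choose (t+1+1) := Nat.choose_pos (by omega)
      set C1 := (t+1+q).choose (t+1) with hC1
      set C2 := (t+1+(q+1)).choose (t+1) with hC2
      set C2' := (t+1+1+q).choose (t+1+1) with hC2'
      have r1 : (C2' : ℚ) * ((t:ℚ)+2) = (C2 : ℚ) * ((q:ℚ)+1) := by
        have h0 := Nat.choose_succ_right_eq (t+q+2) (t+1)
        have h' : (t+q+2).choose (t+2) * (t+2) = (t+q+2).choose (t+1) * (q+1) := by
          rwa [show t+q+2-(t+1) = q+1 by omega] at h0
        have hh : C2' * (t+2) = C2 * (q+1) := by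
          rw [hC2', hC2, show t+1+1+q = t+q+2 by ring, show t+1+(q+1) = t+q+2 by ring,
            show t+1+1 = t+2 by ring]
          exact h'
        exact_mod_cast congrArg (Nat.cast : ℕ → ℚ) hh
      have r4 : ((t:ℚ)+2) * (C2' : ℚ) = (C1 : ℚ) * ((t:ℚ)+(q:ℚ)+2) := by
        have h' := Nat.add_one_mul_choose_eq (t+q+1) (t+1)
        have h'' : (t+q+2) * ((t+q+1).choose (t+1)) = ((t+q+2).choose (t+2)) * (t+2) := by
          simpa [Nat.succ_eq_add_one] using h'
        have h3 : (t+q+2) * C1 = C2' * (t+2) := by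
          rw [hC1, hC2', show t+1+q = t+q+1 by ring, show t+1+1+q = t+q+2 by ring,
            show t+1+1 = t+2 by ring]
          exact h''
        have h3' : ((t:ℚ)+(q:ℚ)+2) * (C1:ℚ) = (C2':ℚ) * ((t:ℚ)+2) := by
          exact_mod_cast congrArg (Nat.cast : ℕ → ℚ) h3
        linarith [h3']
      have r3 : ((q:ℚ)+1) * (Nf t (q+1) : ℚ)
          = ((t:ℚ)+(q:ℚ)+2) * (Nf t q : ℚ) + ((t:ℚ)+1) * (Nf (t+1) q : ℚ) := by
        have h := NB t q
        exact_mod_cast congrArg (Nat.cast : ℕ → ℚ) h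
      have ht1 : ((t:ℚ)+1) ≠ 0 := by positivity
      have ht2 : ((t:ℚ)+2) ≠ 0 := by positivity
      have hc1 : (C1:ℚ) ≠ 0 := by exact_mod_cast hC1pos.ne'
      have hc2 : (C2:ℚ) ≠ 0 := by exact_mod_cast hC2pos.ne'
      have hc2' : (C2':ℚ) ≠ 0 := by exact_mod_cast hC2'pos.ne'
      rw [div_add_div _ _ (mul_ne_zero ht1 hc1) (mul_ne_zero ht2 hc2'),
        div_eq_div_iff (mul_ne_zero (mul_ne_zero ht1 hc1) (mul_ne_zero ht2 hc2'))
          (mul_ne_zero ht1 hc2)]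
      linear_combination ((Nf t q : ℚ)*((t:ℚ)+1)*(C2:ℚ)) * r4
        - ((Nf t (q+1) : ℚ)*((t:ℚ)+1)*(C1:ℚ)) * r1
        - (((t:ℚ)+1)*(C1:ℚ)*(C2:ℚ)) * r3



/-- For integers `p ≥ 1`, `q ≥ 0`, if `u` is the unique element of
`[p, p+q]` maximizing the 2-adic valuation, then
`v₂(∑_{i=0}^q C(q,i)/(p+i)) = v₂(C(q, u-p)/u)`. -/
theorem stmt0 (p q u : ℕ) (hp : 1 ≤ p)
    (hu : u ∈ Finset.Icc p (p + q))
    (hmax : ∀ c ∈ Finset.Icc p (p + q), c ≠ u → padicValNat 2 c < padicValNat 2 u) :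
    padicValRat 2 (∑ i ∈ Finset.range (q + 1), (q.choose i : ℚ) / (p + i)) =
      padicValRat 2 ((q.choose (u - p) : ℚ) / u) := by
  haveI : Fact (Nat.Prime 2) := ⟨Nat.prime_two⟩
  rw [Finset.mem_Icc] at hu
  obtain ⟨hpu, huq⟩ := hu
  obtain ⟨t, rfl⟩ : ∃ t, p = t + 1 := ⟨p - 1, by omega⟩
  set a := padicValNat 2 u with ha
  have hu0 : u ≠ 0 := by omega
  have hdvdu : 2^a ∣ u := pow_padicValNat_dvd
  have h2au : 2^a ≤ u := Nat.le_of_dvd (by omega) hdvdu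
  have h2a0 : 0 < 2^a := Nat.pow_pos (by norm_num)
  have hd1 : u - (t+1) < 2^a := by
    by_contra h
    push_neg at h
    have hc := hmax (u - 2^a) (Finset.mem_Icc.mpr ⟨by omega, by omega⟩) (by omega)
    have hdd : 2^a ∣ u - 2^a := Nat.dvd_sub hdvdu dvd_rfl
    have : a ≤ padicValNat 2 (u - 2^a) := (padicValNat_dvd_iff_le (by omega)).mp hdd
    omega
  have hd2 : (t+1) + q - u < 2^a := by
    by_contra h
    push_neg at h
    have hc := hmax (u + 2^a) (Finset.mem_Icc.mpr ⟨by omega, by omega⟩) (by omega)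
    have hdd : 2^a ∣ u + 2^a := Nat.dvd_add hdvdu dvd_rfl
    have : a ≤ padicValNat 2 (u + 2^a) := (padicValNat_dvd_iff_le (by omega)).mp hdd
    omega
  have hodd1 : ((t+1)+q).choose u % 2 = 1 := by
    have h := odd_choose_add a u ((t+1)+q-u) hdvdu hd2
    rwa [show u + ((t+1)+q-u) = (t+1)+q by omega] at h
  have hodd2 : (u-1).choose t % 2 = 1 := by
    have hsym : (u-1).choose (u-1-t) = (u-1).choose t := Nat.choose_symm (by omega)
    have h := odd_choose_pred a u (u-(t+1)) hdvdu (by omega) hd1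
    rwa [show u-(t+1) = u-1-t by omega, hsym] at h
  -- rewrite the sum using the key identity
  have hsum : (∑ i ∈ Finset.range (q+1), ((q.choose i : ℚ)) / (((t+1 : ℕ) : ℚ) + i))
      = (Nf t q : ℚ) / (((t+1) * ((t+1+q).choose (t+1)) : ℕ) : ℚ) := by
    rw [← keyB q t]
    apply Finset.sum_congr rfl
    intro i _
    congr 1
    push_cast
    ring
  rw [hsum]
  have hCpos : 0 < (t+1+q).choose (t+1) := Nat.choose_pos (by omega)
  have hD0 : (t+1) * ((t+1+q).choose (t+1)) ≠ 0 := by positivity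
  have hNodd := Nf_odd t q
  have hN0 : Nf t q ≠ 0 := by omega
  have hCq0 : q.choose (u-(t+1)) ≠ 0 := (Nat.choose_pos (by omega)).ne'
  rw [padicValRat.div (by exact_mod_cast hN0) (by exact_mod_cast hD0),
    padicValRat.div (by exact_mod_cast hCq0) (by exact_mod_cast hu0),
    padicValRat.of_nat, padicValRat.of_nat, padicValRat.of_nat, padicValRat.of_nat]
  have hvN : padicValNat 2 (Nf t q) = 0 := padicValNat.eq_zero_of_not_dvd (by omega)
  have hE := prodE (t+1) q u (by omega) hpu huq
  have hoddprod : (((t+1)+q).choose u * (u-1).choose t) % 2 = 1 := by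
    rw [Nat.mul_mod, hodd1, hodd2]
  have hop0 : ((t+1)+q).choose u * (u-1).choose t ≠ 0 := by omega
  have hv0 : padicValNat 2 (((t+1)+q).choose u * (u-1).choose t) = 0 :=
    padicValNat.eq_zero_of_not_dvd (by omega)
  have hvE := congrArg (padicValNat 2) hE
  rw [show (t+1)-1 = t from rfl] at hvE
  rw [padicValNat.mul hCq0 hD0, padicValNat.mul hu0 hop0] at hvE
  rw [hv0] at hvE
  omega
end

section
/- Let u be the unique element of maximal 2-adic valuation in [p, p+q] with k = v₂(u). Then for every c in [p, p+q], v₂(C(q, c-p)/c) ≥ v₂(C(q, u-p)/u), where C denotes binomial coefficients and v₂ is the 2-adic valuation on ℚ. -/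
private lemma val_two_pow_mul (t A : ℕ) (hA : ¬ 2 ∣ A) : padicValNat 2 (2 ^ t * A) = t := by
  have hA0 : A ≠ 0 := by rintro rfl; exact hA (dvd_zero 2)
  rw [padicValNat.mul (pow_ne_zero t two_ne_zero) hA0, padicValNat.prime_pow,
    padicValNat.eq_zero_of_not_dvd hA, add_zero]

private lemma two_decomp (x : ℕ) (hx : x ≠ 0) :
    ∃ X, x = 2 ^ padicValNat 2 x * X ∧ ¬ 2 ∣ X := by
  refine ⟨x / 2 ^ padicValNat 2 x, (Nat.mul_div_cancel' pow_padicValNat_dvd).symm, ?_⟩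
  have := Nat.not_dvd_ordCompl Nat.prime_two hx
  rwa [Nat.factorization_def x Nat.prime_two] at this

/-- valuation of bigger minus smaller, where smaller has smaller valuation -/
private lemma val_sub_lt {x y : ℕ} (hx : x ≠ 0)
    (hv : padicValNat 2 x < padicValNat 2 y) (hxy : x < y) :
    padicValNat 2 (y - x) = padicValNat 2 x := by
  obtain ⟨X, hX, hXodd⟩ := two_decomp x hx
  set t := padicValNat 2 x with ht
  obtain ⟨Y, hY⟩ : 2 ^ (t + 1) ∣ y := (pow_dvd_pow 2 hv).trans pow_padicValNat_dvd
  have hY' : y = 2 ^ t * (2 * Y) := by rw [hY, pow_succ]; ring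
  have hle : X ≤ 2 * Y := by
    have := hxy; rw [hX, hY'] at this
    exact (Nat.mul_lt_mul_left (Nat.pos_of_ne_zero (pow_ne_zero t two_ne_zero)) |>.mp this).le
  have hsub : y - x = 2 ^ t * (2 * Y - X) := by rw [hX, hY', Nat.mul_sub]
  rw [hsub]
  apply val_two_pow_mul
  intro h
  have h2 : 2 * Y - (2 * Y - X) = X := Nat.sub_sub_self hle
  exact hXodd (h2 ▸ Nat.dvd_sub ⟨Y, rfl⟩ h)

/-- valuation of bigger minus smaller, where bigger has smaller valuation -/
private lemma val_sub_gt {x y : ℕ} (hx : x ≠ 0)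
    (hv : padicValNat 2 x < padicValNat 2 y) (hxy : y < x) :
    padicValNat 2 (x - y) = padicValNat 2 x := by
  obtain ⟨X, hX, hXodd⟩ := two_decomp x hx
  set t := padicValNat 2 x with ht
  obtain ⟨Y, hY⟩ : 2 ^ (t + 1) ∣ y := (pow_dvd_pow 2 hv).trans pow_padicValNat_dvd
  have hY' : y = 2 ^ t * (2 * Y) := by rw [hY, pow_succ]; ring
  have hle : 2 * Y ≤ X := by
    have := hxy; rw [hX, hY'] at this
    exact (Nat.mul_lt_mul_left (Nat.pos_of_ne_zero (pow_ne_zero t two_ne_zero)) |>.mp this).le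
  have hsub : x - y = 2 ^ t * (X - 2 * Y) := by rw [hX, hY', Nat.mul_sub]
  rw [hsub]
  apply val_two_pow_mul
  intro h
  have h2 : (X - 2 * Y) + 2 * Y = X := Nat.sub_add_cancel hle
  exact hXodd (h2 ▸ Nat.dvd_add h ⟨Y, rfl⟩)

/-- Key carry bound: if `x + y < 2^(k+1)` and `y ≠ 0`, the number of carries when adding
`x` and `y` in base 2 plus `v₂(y)` is at most `k`. -/
private lemma key_carry {k x y : ℕ} (hy : y ≠ 0) (hxy : x + y < 2 ^ (k + 1)) :
    padicValNat 2 ((x + y).choose y) + padicValNat 2 y ≤ k := by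
  set t := padicValNat 2 y with ht
  have h2t : 2 ^ t ≤ y := Nat.le_of_dvd (Nat.pos_of_ne_zero hy) pow_padicValNat_dvd
  have htk : t ≤ k := by
    have h1 : 2 ^ t < 2 ^ (k + 1) := lt_of_le_of_lt (h2t.trans (Nat.le_add_left y x)) hxy
    have := (Nat.pow_lt_pow_iff_right one_lt_two).mp h1
    omega
  have hlog : Nat.log 2 (x + y) < k + 1 :=
    Nat.log_lt_of_lt_pow (by positivity) hxy
  rw [padicValNat_choose' hlog]
  have hsub : ((Finset.Ico 1 (k + 1)).filter fun i => 2 ^ i ≤ y % 2 ^ i + x % 2 ^ i)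
      ⊆ Finset.Ico (t + 1) (k + 1) := by
    intro i hi
    simp only [Finset.mem_filter, Finset.mem_Ico] at hi ⊢
    refine ⟨?_, hi.1.2⟩
    by_contra hit
    push_neg at hit
    have hdvd : 2 ^ i ∣ y := (pow_dvd_pow 2 (by omega)).trans pow_padicValNat_dvd
    have hmod : y % 2 ^ i = 0 := Nat.mod_eq_zero_of_dvd hdvd
    have hx : x % 2 ^ i < 2 ^ i := Nat.mod_lt x (by positivity)
    omega
  have hcard := Finset.card_le_card hsub
  rw [Nat.card_Ico] at hcard
  omega

/-- If `u` is the unique element of maximal 2-adic valuation in `[p, p+q]`,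
then for every `c` in `[p, p+q]`, `v₂(C(q, c-p)/c) ≥ v₂(C(q, u-p)/u)`. -/
theorem stmt2 (p q u : ℕ) (hp : 1 ≤ p)
    (hu : u ∈ Finset.Icc p (p + q))
    (hmax : ∀ c ∈ Finset.Icc p (p + q), c ≠ u → padicValNat 2 c < padicValNat 2 u) :
    ∀ c ∈ Finset.Icc p (p + q),
      padicValRat 2 ((q.choose (u - p) : ℚ) / u) ≤
        padicValRat 2 ((q.choose (c - p) : ℚ) / c) := by
  intro c hc
  rw [Finset.mem_Icc] at hu hc
  obtain ⟨hup, huq⟩ := hu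
  obtain ⟨hcp, hcq⟩ := hc
  have hu0 : u ≠ 0 := by omega
  have hc0 : c ≠ 0 := by omega
  set k := padicValNat 2 u with hk
  by_cases hcu : c = u
  · subst hcu; exact le_refl _
  have hklt : padicValNat 2 c < k :=
    hmax c (Finset.mem_Icc.mpr ⟨hcp, hcq⟩) hcu
  -- the interval has length < 2^(k+1)
  have hq2 : q < 2 ^ (k + 1) := by
    by_contra hqc
    push_neg at hqc
    obtain ⟨U, hU, hUodd⟩ := two_decomp u hu0
    have h2k : (2 : ℕ) ^ k ≤ u := Nat.le_of_dvd (by omega) pow_padicValNat_dvd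
    have hUmod : U % 2 = 1 := by
      rcases Nat.mod_two_eq_zero_or_one U with h | h
      · exact absurd (Nat.dvd_of_mod_eq_zero h) hUodd
      · exact h
    have h2k1 : (2 : ℕ) ^ (k + 1) = 2 ^ k * 2 := by rw [pow_succ]
    have hside : 2 ^ k ≤ u - p ∨ 2 ^ k ≤ p + q - u := by omega
    rcases hside with h | h
    · -- c' = u - 2^k has valuation ≥ k+1
      have hc'0 : u - 2 ^ k ≠ 0 := by omega
      obtain ⟨V, hV⟩ : 2 ∣ (U - 1) := by omega
      have hU1 : 1 ≤ U := by
        rcases Nat.eq_zero_or_pos U with h0 | h0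
        · subst h0; simp at hU; omega
        · exact h0
      have hdvd : 2 ^ (k + 1) ∣ u - 2 ^ k := by
        refine ⟨V, ?_⟩
        have e1 : u - 2 ^ k = 2 ^ k * (U - 1) := by
          rw [hU, Nat.mul_sub, mul_one]
        rw [e1, hV, pow_succ]; ring
      have hge : k + 1 ≤ padicValNat 2 (u - 2 ^ k) :=
        (padicValNat_dvd_iff_le hc'0).mp hdvd
      have hlt : padicValNat 2 (u - 2 ^ k) < k := by
        refine hmax _ (Finset.mem_Icc.mpr ⟨by omega, by omega⟩) (by omega)
      omega
    · -- c' = u + 2^k has valuation ≥ k+1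
      obtain ⟨V, hV⟩ : 2 ∣ (U + 1) := by omega
      have hdvd : 2 ^ (k + 1) ∣ u + 2 ^ k := by
        refine ⟨V, ?_⟩
        have e1 : u + 2 ^ k = 2 ^ k * (U + 1) := by rw [hU, Nat.mul_add, mul_one]
        rw [e1, hV, pow_succ]; ring
      have hge : k + 1 ≤ padicValNat 2 (u + 2 ^ k) :=
        (padicValNat_dvd_iff_le (by positivity)).mp hdvd
      have hlt : padicValNat 2 (u + 2 ^ k) < k := by
        refine hmax _ (Finset.mem_Icc.mpr ⟨by omega, by omega⟩) (by omega)
      omega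
  -- nonvanishing of the binomial coefficients
  have hA0 : q.choose (u - p) ≠ 0 := (Nat.choose_pos (by omega)).ne'
  have hB0 : q.choose (c - p) ≠ 0 := (Nat.choose_pos (by omega)).ne'
  -- the key natural-number inequality
  have hnat : padicValNat 2 (q.choose (u - p)) + padicValNat 2 c ≤
      padicValNat 2 (q.choose (c - p)) + k := by
    rcases Nat.lt_or_ge c u with hlt | hge
    · -- c < u
      have hvc : padicValNat 2 (u - c) = padicValNat 2 c := val_sub_lt hc0 hklt hlt
      have hid := Nat.choose_mul (n := q) (show c - p ≤ u - p by omega)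
      have e1 : (u - p) - (c - p) = u - c := by omega
      have e2 : q - (c - p) = (q - (u - p)) + (u - c) := by omega
      rw [e1, e2] at hid
      have hC1 : (u - p).choose (c - p) ≠ 0 := (Nat.choose_pos (by omega)).ne'
      have hC2 : ((q - (u - p)) + (u - c)).choose (u - c) ≠ 0 :=
        (Nat.choose_pos (Nat.le_add_left _ _)).ne'
      have hval : padicValNat 2 (q.choose (u - p)) + padicValNat 2 ((u - p).choose (c - p)) =
          padicValNat 2 (q.choose (c - p)) +
            padicValNat 2 (((q - (u - p)) + (u - c)).choose (u - c)) := by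
        rw [← padicValNat.mul hA0 hC1, hid, padicValNat.mul hB0 hC2]
      have hkey := key_carry (k := k) (x := q - (u - p)) (y := u - c)
        (by omega) (by omega)
      omega
    · -- u < c
      have hlt' : u < c := by omega
      have hvc : padicValNat 2 (c - u) = padicValNat 2 c := val_sub_gt hc0 hklt hlt'
      have hid := Nat.choose_mul (n := q) (show u - p ≤ c - p by omega)
      have e1 : (c - p) - (u - p) = c - u := by omega
      rw [e1] at hid
      have e3 : c - p = (u - p) + (c - u) := by omega
      have hsymm : (c - p).choose (u - p) = (c - p).choose (c - u) := by
        rw [e3, ← Nat.choose_symm (Nat.le_add_left (c - u) (u - p)), Nat.add_sub_cancel]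
      rw [hsymm] at hid
      have hC1 : (c - p).choose (c - u) ≠ 0 := (Nat.choose_pos (by omega)).ne'
      have hC2 : (q - (u - p)).choose (c - u) ≠ 0 := (Nat.choose_pos (by omega)).ne'
      have hval : padicValNat 2 (q.choose (c - p)) + padicValNat 2 ((c - p).choose (c - u)) =
          padicValNat 2 (q.choose (u - p)) + padicValNat 2 ((q - (u - p)).choose (c - u)) := by
        rw [← padicValNat.mul hB0 hC1, hid, padicValNat.mul hA0 hC2]
      have hkey := key_carry (k := k) (x := u - p) (y := c - u) (by omega) (by omega)
      rw [e3] at hC1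
      have hkey' : padicValNat 2 ((c - p).choose (c - u)) + padicValNat 2 (c - u) ≤ k := by
        rw [e3]; exact hkey
      omega
  -- convert to the rational statement
  have hcQ : (c : ℚ) ≠ 0 := Nat.cast_ne_zero.mpr hc0
  have huQ : (u : ℚ) ≠ 0 := Nat.cast_ne_zero.mpr hu0
  have hAQ : (q.choose (u - p) : ℚ) ≠ 0 := Nat.cast_ne_zero.mpr hA0
  have hBQ : (q.choose (c - p) : ℚ) ≠ 0 := Nat.cast_ne_zero.mpr hB0
  rw [padicValRat.div hAQ huQ, padicValRat.div hBQ hcQ,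
    padicValRat.of_nat, padicValRat.of_nat, padicValRat.of_nat, padicValRat.of_nat]
  omega
end

section
/- Let M be a generating list of nonzero vectors v₁,...,v_n of 𝔽₂^r with ∑_{i=1}^n v_i ≠ 0 in 𝔽₂^r (the generic condition). Then the 𝔽₂-vector space (ℤ/2ℤ)[x₁,...,x_r]/(x₁²−1, ..., x_r²−1, n − ∑_{i=1}^n ∏_j x_j^{(v_i)_j}) has dimension 2^{r−1} over 𝔽₂. -/
namespace Stmt13

open MvPolynomial AddMonoidAlgebra

variable {r : ℕ}

local notation "𝔽" => ZMod 2

abbrev Gr (r : ℕ) := Fin r → ZMod 2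
abbrev Rr (r : ℕ) := AddMonoidAlgebra (ZMod 2) (Gr r)
abbrev Ar (r : ℕ) := MvPolynomial (Fin r) (ZMod 2)

instance : CharP (Rr r) 2 :=
  charP_of_injective_algebraMap (algebraMap (ZMod 2) (Rr r)).injective 2

lemma two_torsion (g : Gr r) : g + g = 0 := by
  funext j; exact CharTwo.add_self_eq_zero _

lemma single_sq (g : Gr r) : (AddMonoidAlgebra.single g (1:𝔽))^2 = 1 := by
  rw [AddMonoidAlgebra.single_pow, two_smul, two_torsion, one_pow]
  rfl

lemma sum_single_sq {ι : Type*} (S : Finset ι) (w : ι → Gr r) :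
    (∑ i ∈ S, AddMonoidAlgebra.single (w i) (1:𝔽))^2 = ((S.card : ℕ) : Rr r) := by
  classical
  induction S using Finset.induction with
  | empty => simp
  | insert a s h ih =>
      rw [Finset.sum_insert h, CharTwo.add_sq, single_sq, ih,
        Finset.card_insert_of_notMem h]
      push_cast
      ring

lemma natCast_odd {k : ℕ} (hk : Odd k) : ((k : ℕ) : Rr r) = 1 := by
  obtain ⟨m, rfl⟩ := hk
  have h2 : ((2:ℕ) : Rr r) = 0 := CharP.cast_eq_zero (Rr r) 2
  push_cast
  push_cast at h2
  rw [h2]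
  ring

lemma natCast_sq (k : ℕ) : ((k : ℕ) : Rr r)^2 = ((k:ℕ) : Rr r) := by
  rcases Nat.even_or_odd k with he | ho
  · obtain ⟨m, rfl⟩ := he
    have h2 : ((2:ℕ) : Rr r) = 0 := CharP.cast_eq_zero (Rr r) 2
    push_cast
    push_cast at h2
    rw [show (m : Rr r) + m = 2 * m by ring, h2]
    ring
  · rw [natCast_odd ho]; ring

lemma prod_single_pow (g : Gr r) :
    ∏ j : Fin r, (AddMonoidAlgebra.single (M := Gr r) (Pi.single j (1:𝔽)) (1:𝔽)) ^ (g j).val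
      = AddMonoidAlgebra.single g 1 := by
  have h1 : ∀ j : Fin r, (AddMonoidAlgebra.single (M := Gr r) (Pi.single j (1:𝔽)) (1:𝔽)) ^ (g j).val
      = AddMonoidAlgebra.single ((g j).val • Pi.single j (1:𝔽)) 1 := fun j => by
    rw [AddMonoidAlgebra.single_pow, one_pow]
  rw [Finset.prod_congr rfl (fun j _ => h1 j), AddMonoidAlgebra.prod_single,
    Finset.prod_const_one]
  congr 1
  funext k
  rw [Finset.sum_apply]
  rw [Finset.sum_eq_single k (fun b _ hb => by
    rw [Pi.smul_apply, Pi.single_eq_of_ne (Ne.symm hb), smul_zero])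
    (fun h => absurd (Finset.mem_univ k) h)]
  rw [Pi.smul_apply, Pi.single_eq_same, nsmul_eq_mul, mul_one, ZMod.natCast_val,
    ZMod.cast_id]

noncomputable def Φ (r : ℕ) : Ar r →ₐ[𝔽] Rr r :=
  aeval fun j => AddMonoidAlgebra.single (Pi.single j 1) 1

lemma Φ_monomial (d : Fin r →₀ ℕ) (c : 𝔽) :
    Φ r (monomial d c) = AddMonoidAlgebra.single (fun j => ((d j : ℕ) : 𝔽)) c := by
  rw [Φ, aeval_monomial, Finsupp.prod_fintype _ _ (fun j => pow_zero _)]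
  have h1 : ∀ j : Fin r, (AddMonoidAlgebra.single (M := Gr r) (Pi.single j (1:𝔽)) (1:𝔽)) ^ (d j)
      = AddMonoidAlgebra.single ((d j) • Pi.single j (1:𝔽)) 1 := fun j => by
    rw [AddMonoidAlgebra.single_pow, one_pow]
  rw [Finset.prod_congr rfl (fun j _ => h1 j), AddMonoidAlgebra.prod_single,
    Finset.prod_const_one]
  have hg : (∑ j, (d j) • Pi.single j (1:𝔽)) = fun j => ((d j : ℕ) : 𝔽) := by
    funext k
    rw [Finset.sum_apply]
    rw [Finset.sum_eq_single k (fun b _ hb => by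
      rw [Pi.smul_apply, Pi.single_eq_of_ne (Ne.symm hb), smul_zero])
      (fun h => absurd (Finset.mem_univ k) h)]
    rw [Pi.smul_apply, Pi.single_eq_same, nsmul_eq_mul, mul_one]
  rw [hg]
  rw [show (algebraMap 𝔽 (Rr r)) c = AddMonoidAlgebra.single 0 c by
    rw [AddMonoidAlgebra.coe_algebraMap]; simp]
  rw [AddMonoidAlgebra.single_mul_single, zero_add, mul_one]

noncomputable def desc (g : Gr r) : Fin r →₀ ℕ :=
  Finsupp.equivFunOnFinite.symm fun j => (g j).val

noncomputable def sec (r : ℕ) : Rr r →ₗ[𝔽] Ar r :=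
  (Finsupp.lsum 𝔽 fun g => monomial (desc g)) ∘ₗ (AddMonoidAlgebra.coeffLinearEquiv 𝔽).toLinearMap

lemma sec_single (g : Gr r) (c : 𝔽) :
    sec r (AddMonoidAlgebra.single g c) = monomial (desc g) c :=
  show Finsupp.lsum 𝔽 (fun g => monomial (desc g)) (Finsupp.single g c) = _ from
  Finsupp.lsum_single _ _ _ _

noncomputable def I₂ (r : ℕ) : Ideal (Ar r) :=
  Ideal.span (Set.range fun j : Fin r => (X j : Ar r)^2 - 1)

lemma dm_apply (d : Fin r →₀ ℕ) (j : Fin r) :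
    desc (fun j => ((d j : ℕ) : 𝔽)) j = d j % 2 := by
  simp [desc, ZMod.val_natCast]

lemma red (k : ℕ) : ∀ d : Fin r →₀ ℕ, (d.sum fun _ m => m) = k → ∀ c : 𝔽,
    monomial d c - monomial (desc (fun j => ((d j : ℕ) : 𝔽))) c ∈ I₂ r := by
  induction k using Nat.strong_induction_on with
  | _ k ih =>
    intro d hd c
    by_cases h : ∀ j, d j < 2
    · have hdd : desc (fun j => ((d j : ℕ) : 𝔽)) = d :=
        Finsupp.ext fun j => by rw [dm_apply]; exact Nat.mod_eq_of_lt (h j)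
      rw [hdd, sub_self]; exact zero_mem _
    · push_neg at h
      obtain ⟨j, hj⟩ := h
      set d' := d - Finsupp.single j 2 with hd'
      have hsplit : d = d' + Finsupp.single j 2 := by
        ext a
        by_cases ha : a = j
        · subst ha
          simp [hd', Finsupp.single_apply]
          omega
        · have ha' : ¬ j = a := fun hh => ha hh.symm
          simp [hd', Finsupp.single_apply, ha']
      have hmon : monomial d c = monomial d' c * (X j ^ 2) := by
        rw [X_pow_eq_monomial, monomial_mul, mul_one, ← hsplit]
      have hδ : desc (fun a => ((d' a : ℕ) : 𝔽)) = desc (fun a => ((d a : ℕ) : 𝔽)) := by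
        apply Finsupp.ext
        intro a
        rw [dm_apply, dm_apply]
        by_cases ha : a = j
        · subst ha
          have : d' a = d a - 2 := by simp [hd', Finsupp.single_apply]
          rw [this]
          omega
        · have ha' : ¬ j = a := fun hh => ha hh.symm
          have : d' a = d a := by simp [hd', Finsupp.single_apply, ha']
          rw [this]
      have hsum : (d'.sum fun _ m => m) + 2 = k := by
        rw [← hd, hsplit, Finsupp.sum_add_index' (fun _ => rfl) (fun _ _ _ => rfl)]
        rw [Finsupp.sum_single_index rfl]
      have h1 : monomial d' c * (X j ^ 2 - 1) ∈ I₂ r :=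
        Ideal.mul_mem_left _ _ (Ideal.subset_span ⟨j, rfl⟩)
      have h2 := ih (d'.sum fun _ m => m) (by omega) d' rfl c
      rw [hδ] at h2
      have heq : monomial d c - monomial (desc (fun a => ((d a : ℕ) : 𝔽))) c
          = monomial d' c * (X j ^2 - 1)
            + (monomial d' c - monomial (desc (fun a => ((d a : ℕ) : 𝔽))) c) := by
        rw [hmon]; ring
      rw [heq]
      exact add_mem h1 h2

lemma sub_sec_mem (p : Ar r) : p - sec r (Φ r p) ∈ I₂ r := by
  induction p using MvPolynomial.induction_on' with
  | monomial d c =>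
      rw [Φ_monomial, sec_single]
      exact red _ d rfl c
  | add p q hp hq =>
      have h := add_mem hp hq
      have : p + q - sec r (Φ r (p + q))
          = (p - sec r (Φ r p)) + (q - sec r (Φ r q)) := by
        rw [map_add, map_add]; ring
      rw [this]; exact h

lemma Φ_single (g : Gr r) (c : 𝔽) :
    Φ r (monomial (desc g) c) = AddMonoidAlgebra.single g c := by
  rw [Φ_monomial]
  congr 1
  funext j
  simp [desc, ZMod.natCast_val, ZMod.cast_id]

lemma Φ_surjective : Function.Surjective (Φ r) := by
  intro x
  induction x using AddMonoidAlgebra.induction_linear with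
  | zero => exact ⟨0, map_zero _⟩
  | add f g hf hg =>
      obtain ⟨p, hp⟩ := hf; obtain ⟨q, hq⟩ := hg
      exact ⟨p + q, by rw [map_add, hp, hq]⟩
  | single g c => exact ⟨monomial (desc g) c, Φ_single g c⟩

lemma card_H (j0 : Fin r) :
    Fintype.card {g : Fin r → ZMod 2 // g j0 = 0} = 2^(r-1) := by
  classical
  have e : {g : Fin r → ZMod 2 // g j0 = 0} ≃ ({j : Fin r // j ≠ j0} → ZMod 2) :=
    { toFun := fun g j => g.1 j.1
      invFun := fun h => ⟨fun j => if hj : j = j0 then 0 else h ⟨j, hj⟩, by simp⟩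
      left_inv := fun g => by
        ext j
        by_cases hj : j = j0
        · subst hj; simpa using g.2.symm
        · simp [hj]
      right_inv := fun h => by
        funext j
        simp [j.2] }
  rw [Fintype.card_congr e, Fintype.card_fun]
  have h1 : Fintype.card {j : Fin r // j ≠ j0} = r - 1 := by
    have := Fintype.card_subtype_compl (fun j : Fin r => j = j0)
    simpa [Fintype.card_subtype_eq] using this
  rw [h1]
  congr 1

end Stmt13

set_option maxHeartbeats 1000000 in
open MvPolynomial in
/-- For a generic generating list `M = (v₁,…,v_n)` of nonzero vectors of
`𝔽₂^r` (i.e. `∑ v_i ≠ 0`), the `𝔽₂`-algebra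
`𝔽₂[x₁,…,x_r]/(x₁²-1,…,x_r²-1, n - ∑_i ∏_j x_j^{(v_i)_j})` has dimension `2^(r-1)`. -/
theorem stmt13 (r n : ℕ) (M : Fin n → Fin r → ZMod 2)
    (hnz : ∀ i, M i ≠ 0)
    (hgen : Submodule.span (ZMod 2) (Set.range M) = ⊤)
    (hgeneric : ∑ i, M i ≠ 0) :
    Module.finrank (ZMod 2)
      (MvPolynomial (Fin r) (ZMod 2) ⧸
        Ideal.span ((Set.range fun j : Fin r =>
            (X j : MvPolynomial (Fin r) (ZMod 2)) ^ 2 - 1) ∪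
          {(n : MvPolynomial (Fin r) (ZMod 2)) - ∑ i, ∏ j, X j ^ (M i j).val})) =
      2 ^ (r - 1) := by
  classical
  obtain ⟨j0, hj0⟩ : ∃ j0, (∑ i, M i) j0 ≠ 0 := by
    by_contra h
    push_neg at h
    exact hgeneric (funext fun j => h j)
  set f : Stmt13.Ar r := (n : MvPolynomial (Fin r) (ZMod 2)) - ∑ i, ∏ j, X j ^ (M i j).val with hf
  set I : Ideal (Stmt13.Ar r) := Ideal.span ((Set.range fun j : Fin r =>
      (X j : MvPolynomial (Fin r) (ZMod 2)) ^ 2 - 1) ∪ {f}) with hI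
  set Fq : Stmt13.Rr r := (n : Stmt13.Rr r) - ∑ i, AddMonoidAlgebra.single (M i) 1 with hFq
  have hΦf : Stmt13.Φ r f = Fq := by
    rw [hf, hFq, map_sub, map_natCast, map_sum]
    congr 1
    refine Finset.sum_congr rfl fun i _ => ?_
    rw [map_prod]
    calc ∏ j, Stmt13.Φ r (X j ^ (M i j).val)
        = ∏ j : Fin r, (AddMonoidAlgebra.single (M := Stmt13.Gr r)
            (Pi.single j (1:ZMod 2)) (1:ZMod 2)) ^ (M i j).val := by
          refine Finset.prod_congr rfl fun j _ => ?_
          rw [map_pow, Stmt13.Φ, aeval_X]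
      _ = AddMonoidAlgebra.single (M i) 1 := Stmt13.prod_single_pow (M i)
  set J : Ideal (Stmt13.Rr r) := Ideal.span {Fq} with hJ
  set Ψ : Stmt13.Ar r →ₐ[ZMod 2] Stmt13.Rr r ⧸ J :=
    (Ideal.Quotient.mkₐ (ZMod 2) J).comp (Stmt13.Φ r) with hΨ
  have hΨ0 : ∀ p : Stmt13.Ar r, Ψ p = 0 ↔ Stmt13.Φ r p ∈ J := fun p => by
    rw [hΨ, AlgHom.comp_apply, Ideal.Quotient.mkₐ_eq_mk, Ideal.Quotient.eq_zero_iff_mem]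
  have hΨsurj : Function.Surjective Ψ := by
    intro x
    obtain ⟨y, hy⟩ := Ideal.Quotient.mk_surjective (I := J) x
    obtain ⟨p, hp⟩ := Stmt13.Φ_surjective y
    refine ⟨p, ?_⟩
    rw [hΨ, AlgHom.comp_apply, Ideal.Quotient.mkₐ_eq_mk, hp, hy]
  have hker : RingHom.ker Ψ = I := by
    apply le_antisymm
    · intro p hp
      rw [RingHom.mem_ker] at hp
      have hp2 : Stmt13.Φ r p ∈ J := (hΨ0 p).mp hp
      obtain ⟨y, hy⟩ := Ideal.mem_span_singleton'.mp hp2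
      obtain ⟨q, hq⟩ := Stmt13.Φ_surjective y
      have hfI : f ∈ I := hI ▸ Ideal.subset_span (Or.inr rfl)
      have hwI : f * q ∈ I := Ideal.mul_mem_right q _ hfI
      have hI2 : Stmt13.I₂ r ≤ I := hI ▸ Ideal.span_mono Set.subset_union_left
      have h1 : p - Stmt13.sec r (Stmt13.Φ r p) ∈ I := hI2 (Stmt13.sub_sec_mem p)
      have h2 : f * q - Stmt13.sec r (Stmt13.Φ r (f * q)) ∈ I :=
        hI2 (Stmt13.sub_sec_mem (f * q))
      have heq : Stmt13.Φ r (f * q) = Stmt13.Φ r p := by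
        rw [map_mul, hΦf, hq, mul_comm, hy]
      have hrw : p = (p - Stmt13.sec r (Stmt13.Φ r p))
          - (f * q - Stmt13.sec r (Stmt13.Φ r (f * q))) + f * q := by
        rw [heq]; ring
      rw [hrw]
      exact add_mem (sub_mem h1 h2) hwI
    · rw [hI, Ideal.span_le]
      rintro x (⟨j, rfl⟩ | rfl)
      · have hx : Stmt13.Φ r ((X j : MvPolynomial (Fin r) (ZMod 2))^2 - 1) = 0 := by
          rw [map_sub, map_pow, map_one, Stmt13.Φ, aeval_X, Stmt13.single_sq, sub_self]
        have h0 : Ψ ((X j : MvPolynomial (Fin r) (ZMod 2))^2 - 1) = 0 := by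
          rw [(hΨ0 _), hx]; exact zero_mem _
        simpa only [SetLike.mem_coe, RingHom.mem_ker] using h0
      · have h0 : Ψ f = 0 := by
          rw [(hΨ0 _), hΦf]; exact Ideal.subset_span rfl
        simpa only [SetLike.mem_coe, RingHom.mem_ker] using h0
  have hfr1 : Module.finrank (ZMod 2) (Stmt13.Ar r ⧸ I)
      = Module.finrank (ZMod 2) (Stmt13.Rr r ⧸ J) := by
    rw [← hker]
    exact (Ideal.quotientKerAlgEquivOfSurjective hΨsurj).toLinearEquiv.finrank_eq
  rw [hfr1]
  -- now compute the dimension of (Rr r) ⧸ J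
  have hzm2 : ∀ a : ZMod 2, a = 0 ∨ a = 1 := by decide
  have hFq2 : Fq * Fq = 0 := by
    have hs := Stmt13.sum_single_sq (Finset.univ : Finset (Fin n)) M
    rw [Finset.card_univ, Fintype.card_fin] at hs
    have : Fq * Fq = Fq ^ 2 := (sq Fq).symm
    rw [this, hFq, sub_pow_char, hs, Stmt13.natCast_sq, sub_self]
  -- the distinguished coordinate
  set e : Stmt13.Gr r := Pi.single j0 1 with he
  set T : Finset (Fin n) := Finset.univ.filter (fun i => M i j0 = 1) with hT
  have hTodd : Odd T.card := by
    have hsum : (∑ i, M i) j0 = ((T.card : ℕ) : ZMod 2) := by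
      rw [Finset.sum_apply]
      have h1 : ∀ i ∈ Finset.univ, M i j0 = if M i j0 = 1 then 1 else 0 := by
        intro i _
        rcases hzm2 (M i j0) with h | h <;> simp [h]
      rw [Finset.sum_congr rfl h1, Finset.sum_boole, hT]
    rw [hsum] at hj0
    rcases Nat.even_or_odd T.card with hev | hod
    · exfalso
      apply hj0
      obtain ⟨m, hm⟩ := hev
      rw [hm]
      push_cast
      exact CharTwo.add_self_eq_zero _
    · exact hod
  set F₁ : Stmt13.Rr r := ∑ i ∈ T, AddMonoidAlgebra.single (M i + e) 1 with hF₁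
  set tt : Stmt13.Rr r := AddMonoidAlgebra.single e 1 with htt
  have httsq : tt * tt = 1 := by
    rw [htt, AddMonoidAlgebra.single_mul_single, Stmt13.two_torsion, one_mul]
    rfl
  have hF₁sq : F₁ * F₁ = 1 := by
    have : F₁ * F₁ = F₁ ^ 2 := (sq F₁).symm
    rw [this, hF₁, Stmt13.sum_single_sq, Stmt13.natCast_odd hTodd]
  set C : Stmt13.Rr r := (n : Stmt13.Rr r) - ∑ i ∈ Tᶜ, AddMonoidAlgebra.single (M i) 1 with hC
  have hdecomp : Fq = C - tt * F₁ := by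
    have h1 : tt * F₁ = ∑ i ∈ T, AddMonoidAlgebra.single (M i) 1 := by
      rw [htt, hF₁, Finset.mul_sum]
      refine Finset.sum_congr rfl fun i _ => ?_
      rw [AddMonoidAlgebra.single_mul_single, one_mul]
      congr 1
      rw [add_comm (M i) e, ← add_assoc, Stmt13.two_torsion, zero_add]
    rw [h1, hC, hFq, ← Finset.sum_add_sum_compl T (fun i => AddMonoidAlgebra.single (M i) (1 : ZMod 2))]
    ring
  -- support considerations
  set H : Set (Stmt13.Gr r) := {g | g j0 = 0} with hH
  have hHadd : ∀ a b : Stmt13.Gr r, a ∈ H → b ∈ H → a + b ∈ H := by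
    intro a b ha hb
    simp only [hH, Set.mem_setOf_eq, Pi.add_apply] at *
    rw [ha, hb, add_zero]
  have hmulH : ∀ x y : Stmt13.Rr r, ↑x.coeff.support ⊆ H → ↑y.coeff.support ⊆ H →
      ↑(x * y).coeff.support ⊆ H := by
    intro x y hx hy a ha
    have h2 := AddMonoidAlgebra.support_coeff_mul_subset x y ha
    rw [Finset.mem_add] at h2
    obtain ⟨p, hp, q, hq, rfl⟩ := h2
    exact hHadd _ _ (hx hp) (hy hq)
  have hsuppNat : ∀ m : ℕ, ↑((m : Stmt13.Rr r).coeff.support) ⊆ H := by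
    intro m a ha
    have h1 : (m : Stmt13.Rr r) = AddMonoidAlgebra.single 0 ((m : ℕ) : ZMod 2) := by
      rw [← map_natCast (algebraMap (ZMod 2) (Stmt13.Rr r)) m, AddMonoidAlgebra.coe_algebraMap]
      simp
    rw [h1] at ha
    have := Finsupp.support_single_subset ha
    rw [Finset.mem_singleton] at this
    subst this
    simp [hH]
  have hsuppC : ↑C.coeff.support ⊆ H := by
    intro a ha
    rw [hC, AddMonoidAlgebra.coeff_sub] at ha
    have h2 := Finsupp.support_sub ha
    rw [Finset.mem_union] at h2
    rcases h2 with h2 | h2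
    · exact hsuppNat n h2
    · rw [AddMonoidAlgebra.coeff_sum] at h2
      have h3 := Finsupp.support_finset_sum h2
      rw [Finset.mem_biUnion] at h3
      obtain ⟨i, hi, hia⟩ := h3
      have := Finsupp.support_single_subset hia
      rw [Finset.mem_singleton] at this
      subst this
      rw [Finset.mem_compl, hT, Finset.mem_filter] at hi
      simp only [Finset.mem_univ, true_and] at hi
      rcases hzm2 (M i j0) with h | h
      · exact h
      · exact absurd h hi
  have hsuppF₁ : ↑F₁.coeff.support ⊆ H := by
    intro a ha
    rw [hF₁, AddMonoidAlgebra.coeff_sum] at ha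
    have h3 := Finsupp.support_finset_sum ha
    rw [Finset.mem_biUnion] at h3
    obtain ⟨i, hi, hia⟩ := h3
    have := Finsupp.support_single_subset hia
    rw [Finset.mem_singleton] at this
    subst this
    rw [hT, Finset.mem_filter] at hi
    show (M i + e) j0 = 0
    rw [Pi.add_apply, hi.2, he, Pi.single_eq_same]
    rfl
  -- the key injectivity
  have hinj : ∀ b : Stmt13.Rr r, ↑b.coeff.support ⊆ H → Fq * b = 0 → b = 0 := by
    intro b hb h0
    have h1 : C * b = tt * (F₁ * b) := by
      have h2 : (C - tt * F₁) * b = 0 := by rw [← hdecomp]; exact h0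
      rw [sub_mul] at h2
      have := sub_eq_zero.mp h2
      rw [this, mul_assoc]
    have hCb : ↑(C * b).coeff.support ⊆ H := hmulH _ _ hsuppC hb
    have hF₁b : ↑(F₁ * b).coeff.support ⊆ H := hmulH _ _ hsuppF₁ hb
    have hRHS : ∀ a ∈ (tt * (F₁ * b)).coeff.support, a j0 = 1 := by
      intro a ha
      have h2 := AddMonoidAlgebra.support_coeff_mul_subset tt (F₁ * b) ha
      rw [Finset.mem_add] at h2
      obtain ⟨p, hp, q, hq, rfl⟩ := h2
      rw [htt] at hp
      have hpe := Finsupp.support_single_subset hp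
      rw [Finset.mem_singleton] at hpe
      subst hpe
      have hq0 : q j0 = 0 := hF₁b hq
      rw [Pi.add_apply, hq0, add_zero, he, Pi.single_eq_same]
    have hz : C * b = 0 := by
      by_contra hne
      obtain ⟨a, ha⟩ := Finsupp.support_nonempty_iff.mpr (mt AddMonoidAlgebra.coeff_eq_zero.mp hne)
      have h2 : a j0 = 0 := hCb ha
      have h3 : a j0 = 1 := by
        rw [h1] at ha
        exact hRHS a ha
      rw [h2] at h3
      exact absurd h3.symm one_ne_zero
    have hz2 : tt * (F₁ * b) = 0 := by rw [← h1]; exact hz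
    have hF₁b0 : F₁ * b = 0 := by
      have h2 : tt * (tt * (F₁ * b)) = 0 := by rw [hz2, mul_zero]
      rwa [← mul_assoc, httsq, one_mul] at h2
    have h3 : F₁ * (F₁ * b) = 0 := by rw [hF₁b0, mul_zero]
    rwa [← mul_assoc, hF₁sq, one_mul] at h3
  -- linear algebra over 𝔽₂
  haveI : Module.Finite (ZMod 2) (Stmt13.Rr r) :=
    Module.Finite.equiv ((AddMonoidAlgebra.coeffLinearEquiv (ZMod 2)).trans
      (Finsupp.linearEquivFunOnFinite (ZMod 2) (ZMod 2) (Stmt13.Gr r))).symm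
  have hrankR : Module.finrank (ZMod 2) (Stmt13.Rr r) = 2 ^ r := by
    have h1 : Module.finrank (ZMod 2) (Stmt13.Rr r) = Fintype.card (Stmt13.Gr r) :=
      (AddMonoidAlgebra.coeffLinearEquiv (ZMod 2)).finrank_eq.trans (Module.finrank_finsupp_self (ZMod 2))
    rw [h1, Fintype.card_fun]
    simp
  set L : Stmt13.Rr r →ₗ[ZMod 2] Stmt13.Rr r := LinearMap.mulLeft (ZMod 2) Fq with hL
  have hrk : LinearMap.range L ≤ LinearMap.ker L := by
    rintro x ⟨y, rfl⟩
    rw [LinearMap.mem_ker, hL, LinearMap.mulLeft_apply, LinearMap.mulLeft_apply,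
      ← mul_assoc, hFq2, zero_mul]
  set V : Submodule (ZMod 2) (Stmt13.Rr r) := AddMonoidAlgebra.supported (ZMod 2) (ZMod 2) H with hV
  haveI : Fintype H := Fintype.ofFinite _
  have hcardH : Fintype.card H = 2 ^ (r - 1) := by
    rw [Fintype.card_congr (Equiv.subtypeEquivRight (fun g => Iff.rfl) :
      H ≃ {g : Fin r → ZMod 2 // g j0 = 0})]
    exact Stmt13.card_H j0
  have hVrank : Module.finrank (ZMod 2) V = 2 ^ (r - 1) := by
    rw [hV]
    have e1 : ↥(AddMonoidAlgebra.supported (ZMod 2) (ZMod 2) H : Submodule (ZMod 2) (Stmt13.Rr r))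
        ≃ₗ[ZMod 2] (H →₀ ZMod 2) := AddMonoidAlgebra.supportedEquivFinsupp H
    refine e1.finrank_eq.trans ?_
    rw [Module.finrank_finsupp_self]
    exact hcardH
  have hinjLv : Function.Injective (L.comp (Submodule.subtype V)) := by
    rw [← LinearMap.ker_eq_bot]
    rw [Submodule.eq_bot_iff]
    intro x hx
    rw [LinearMap.mem_ker, LinearMap.comp_apply, Submodule.subtype_apply] at hx
    rw [hL, LinearMap.mulLeft_apply] at hx
    have hb : ↑(x : Stmt13.Rr r).coeff.support ⊆ H := x.2
    exact Subtype.ext (hinj _ hb hx)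
  have h2a : Module.finrank (ZMod 2) (LinearMap.range (L.comp (Submodule.subtype V)))
      = 2 ^ (r - 1) := by
    rw [LinearMap.finrank_range_of_inj hinjLv, hVrank]
  have h2 : 2 ^ (r - 1) ≤ Module.finrank (ZMod 2) (LinearMap.range L) :=
    h2a ▸ Submodule.finrank_mono (LinearMap.range_comp_le_range _ _)
  have h3 : Module.finrank (ZMod 2) (LinearMap.range L)
      ≤ Module.finrank (ZMod 2) (LinearMap.ker L) := Submodule.finrank_mono hrk
  have h4 := LinearMap.finrank_range_add_finrank_ker L
  rw [hrankR] at h4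
  have hr1 : 0 < r := j0.pos
  have hpow : 2 ^ (r - 1) + 2 ^ (r - 1) = 2 ^ r := by
    have hrr : r - 1 + 1 = r := by omega
    calc 2 ^ (r - 1) + 2 ^ (r - 1) = 2 ^ (r - 1) * 2 := by ring
      _ = 2 ^ (r - 1 + 1) := (pow_succ 2 (r - 1)).symm
      _ = 2 ^ r := by rw [hrr]
  have hrange : Module.finrank (ZMod 2) (LinearMap.range L) = 2 ^ (r - 1) := by omega
  have hJW : Submodule.restrictScalars (ZMod 2) (J : Ideal (Stmt13.Rr r)) = LinearMap.range L := by
    ext x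
    rw [Submodule.restrictScalars_mem, hJ, Ideal.mem_span_singleton']
    constructor
    · rintro ⟨a, rfl⟩
      exact ⟨a, by rw [hL, LinearMap.mulLeft_apply, mul_comm]⟩
    · rintro ⟨a, rfl⟩
      exact ⟨a, by rw [hL, LinearMap.mulLeft_apply, mul_comm]⟩
  have hq := Submodule.finrank_quotient_add_finrank
    (Submodule.restrictScalars (ZMod 2) (J : Ideal (Stmt13.Rr r)))
  have hJrank : Module.finrank (ZMod 2)
      (Submodule.restrictScalars (ZMod 2) (J : Ideal (Stmt13.Rr r))) = 2 ^ (r - 1) := by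
    rw [hJW]; exact hrange
  rw [hJrank, hrankR] at hq
  have hequiv := (Submodule.Quotient.restrictScalarsEquiv (ZMod 2)
    (J : Submodule (Stmt13.Rr r) (Stmt13.Rr r))).finrank_eq
  rw [← hequiv]
  omega
end

section
/- Let M be a generating list of nonzero vectors of 𝔽₂³ such that the number of vectors with odd multiplicity is exactly 1, or exactly 2, or exactly 3 with the three odd-multiplicity vectors linearly independent. Then exactly 4 of the 7 nonzero Laplacian eigenvalues λ_u = 2·#{i : u·v_i = 1} (u ∈ 𝔽₂³ \ {0}) are congruent to 2 mod 4, and the other 3 are divisible by 4. -/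
open Finset

lemma zmod2_cases : ∀ x : ZMod 2, x = 0 ∨ x = 1 := by decide

lemma natCast_zmod2 (m : ℕ) : (m : ZMod 2) = if m % 2 = 1 then 1 else 0 := by
  rw [← ZMod.natCast_mod m 2]
  rcases Nat.mod_two_eq_zero_or_one m with h | h <;> simp [h]

lemma count_card : ∀ s : Fin 3 → ZMod 2, s ≠ 0 →
    ((univ.filter fun u : Fin 3 → ZMod 2 => u ≠ 0 ∧ dotProduct u s = 1).card = 4 ∧
     (univ.filter fun u : Fin 3 → ZMod 2 => u ≠ 0 ∧ dotProduct u s = 0).card = 3) := by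
  decide

lemma parity_key {n : ℕ} (M : Fin n → Fin 3 → ZMod 2) (u : Fin 3 → ZMod 2) :
    (((univ.filter fun i => dotProduct u (M i) = 1).card : ℕ) : ZMod 2)
      = dotProduct u (∑ i, M i) := by
  rw [Finset.card_filter]
  push_cast
  have h1 : ∀ i : Fin n, ((if dotProduct u (M i) = 1 then (1:ZMod 2) else 0))
      = dotProduct u (M i) := by
    intro i
    rcases zmod2_cases (dotProduct u (M i)) with h | h <;> simp [h]
  calc (∑ i, if dotProduct u (M i) = 1 then (1:ZMod 2) else 0)
      = ∑ i, dotProduct u (M i) := by simp_rw [h1]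
    _ = dotProduct u (∑ i, M i) := by
        simp only [dotProduct, Finset.sum_apply, Finset.mul_sum]
        rw [Finset.sum_comm]

lemma sum_eq_odds {n : ℕ} (M : Fin n → Fin 3 → ZMod 2) (hnz : ∀ i, M i ≠ 0) :
    (∑ i, M i) = ∑ v ∈ (univ.filter fun v => v ≠ 0 ∧
      Odd (univ.filter fun i => M i = v).card), v := by
  rw [← Finset.sum_fiberwise univ M M]
  have h2 : ∀ v : Fin 3 → ZMod 2,
      (∑ i ∈ univ.filter fun i => M i = v, M i)
        = ((univ.filter fun i => M i = v).card : ZMod 2) • v := by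
    intro v
    rw [Finset.sum_congr rfl (fun i hi => (Finset.mem_filter.mp hi).2),
      Finset.sum_const, ← Nat.cast_smul_eq_nsmul (ZMod 2)]
  simp_rw [h2]
  rw [Finset.sum_filter]
  refine Finset.sum_congr rfl fun v _ => ?_
  by_cases hv : Odd (univ.filter fun i => M i = v).card
  · have hv0 : v ≠ 0 := by
      rintro rfl
      have : (univ.filter fun i => M i = (0 : Fin 3 → ZMod 2)) = ∅ := by
        apply Finset.filter_eq_empty_iff.mpr
        intro i _; exact hnz i
      rw [this] at hv; simp at hv
    have hc : ((univ.filter fun i => M i = v).card : ZMod 2) = 1 := by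
      rw [natCast_zmod2]; simp [Nat.odd_iff.mp hv]
    simp [hv0, hv, hc]
  · have hc : ((univ.filter fun i => M i = v).card : ZMod 2) = 0 := by
      rw [natCast_zmod2]; simp [Nat.not_odd_iff.mp hv]
    simp [hv, hc]

/-- For a generating list `M` of nonzero vectors of `𝔽₂³` in a generic
case (exactly 1 or 2 vectors of odd multiplicity, or exactly 3 which are linearly
independent), exactly 4 of the 7 nonzero Laplacian eigenvalues
`λ_u = 2·#{i : u·v_i = 1}` are `≡ 2 (mod 4)` and the other 3 are divisible by 4. -/
theorem stmt19 (n : ℕ) (M : Fin n → Fin 3 → ZMod 2)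
    (hnz : ∀ i, M i ≠ 0)
    (hgen : Submodule.span (ZMod 2) (Set.range M) = ⊤)
    (odds : Finset (Fin 3 → ZMod 2))
    (hodds : odds = Finset.univ.filter fun v => v ≠ 0 ∧
      Odd (Finset.univ.filter fun i => M i = v).card)
    (hcase : odds.card = 1 ∨ odds.card = 2 ∨
      (odds.card = 3 ∧
        LinearIndependent (ZMod 2) (fun v : odds => (v : Fin 3 → ZMod 2)))) :
    (Finset.univ.filter fun u : Fin 3 → ZMod 2 => u ≠ 0 ∧
      (2 * (Finset.univ.filter fun i => dotProduct u (M i) = 1).card) % 4 = 2).card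
      = 4 ∧
    (Finset.univ.filter fun u : Fin 3 → ZMod 2 => u ≠ 0 ∧
      4 ∣ 2 * (Finset.univ.filter fun i => dotProduct u (M i) = 1).card).card
      = 3 := by
  have hsodds : (∑ i, M i) = ∑ v ∈ odds, v := by rw [hodds]; exact sum_eq_odds M hnz
  set s := ∑ i, M i with hs
  have hodds_sub : ∀ v ∈ odds, v ≠ (0 : Fin 3 → ZMod 2) := by
    intro v hv; rw [hodds] at hv; exact (Finset.mem_filter.mp hv).2.1
  have hsne : s ≠ 0 := by
    rcases hcase with h1 | h2 | ⟨h3, hli⟩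
    · obtain ⟨a, ha⟩ := Finset.card_eq_one.mp h1
      rw [hsodds, ha, Finset.sum_singleton]
      exact hodds_sub a (ha ▸ Finset.mem_singleton_self a)
    · obtain ⟨a, b, hab, hab2⟩ := Finset.card_eq_two.mp h2
      rw [hsodds, hab2, Finset.sum_pair hab]
      intro h
      apply hab
      have : a = -b := eq_neg_of_add_eq_zero_left h
      simpa [CharTwo.neg_eq] using this
    · intro h0
      have hne : odds.Nonempty := Finset.card_pos.mp (by omega)
      obtain ⟨a, ha⟩ := hne
      have := linearIndependent_iff'.mp hli Finset.univ (fun _ => (1 : ZMod 2)) ?_ ⟨a, ha⟩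
        (Finset.mem_univ _)
      · exact one_ne_zero this
      · simp only [one_smul]
        rw [Finset.sum_coe_sort odds (fun v => (v : Fin 3 → ZMod 2)), ← hsodds]
        exact h0
  have key : ∀ u : Fin 3 → ZMod 2,
      (((univ.filter fun i => dotProduct u (M i) = 1).card : ℕ) : ZMod 2)
        = dotProduct u s := fun u => parity_key M u
  obtain ⟨c1, c2⟩ := count_card s hsne
  have e1 : (Finset.univ.filter fun u : Fin 3 → ZMod 2 => u ≠ 0 ∧
      (2 * (Finset.univ.filter fun i => dotProduct u (M i) = 1).card) % 4 = 2)
      = (univ.filter fun u : Fin 3 → ZMod 2 => u ≠ 0 ∧ dotProduct u s = 1) := by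
    apply Finset.filter_congr
    intro u _
    simp only [ne_eq, and_congr_right_iff]
    intro _
    have hk2 := key u
    rw [natCast_zmod2] at hk2
    rcases Nat.mod_two_eq_zero_or_one
        (univ.filter fun i => dotProduct u (M i) = 1).card with h | h
    · simp only [h, Nat.zero_ne_one, if_false] at hk2
      rw [← hk2]
      exact ⟨fun hh => absurd hh (by omega), fun hh => absurd hh (by decide)⟩
    · simp only [h, if_pos rfl] at hk2
      rw [← hk2]
      exact ⟨fun _ => rfl, fun _ => by omega⟩
  have e2 : (Finset.univ.filter fun u : Fin 3 → ZMod 2 => u ≠ 0 ∧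
      4 ∣ 2 * (Finset.univ.filter fun i => dotProduct u (M i) = 1).card)
      = (univ.filter fun u : Fin 3 → ZMod 2 => u ≠ 0 ∧ dotProduct u s = 0) := by
    apply Finset.filter_congr
    intro u _
    simp only [ne_eq, and_congr_right_iff]
    intro _
    have hk2 := key u
    rw [natCast_zmod2] at hk2
    rcases Nat.mod_two_eq_zero_or_one
        (univ.filter fun i => dotProduct u (M i) = 1).card with h | h
    · simp only [h, Nat.zero_ne_one, if_false] at hk2
      rw [← hk2]
      exact ⟨fun _ => rfl, fun _ => by omega⟩
    · simp only [h, if_pos rfl] at hk2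
      rw [← hk2]
      exact ⟨fun hh => absurd hh (by omega), fun hh => absurd hh (by decide)⟩
  rw [e1, e2]
  exact ⟨c1, c2⟩
end
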